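/- Let X, Y be real normed linear spaces, x ∈ X nonzero, and f₁, …, f_n ∈ J(x). A bounded linear operator T : X → Y preserves Birkhoff-James orthogonality at x with respect to ker f_i for all 1 ≤ i ≤ n if and only if T preserves Birkhoff-James orthogonality at x with respect to ker f for every f in the convex hull of {f₁, …, f_n}. -/

import Mathlib

/-- Birkhoff-James orthogonality. -/
def BJOrth {X : Type*} [NormedAddCommGroup X] [NormedSpace ℝ X] (x y : X) : Prop :=
  ∀ t : ℝ, ‖x‖ ≤ ‖x + t • y‖

/-- The set of support functionals at `x`. -/
def suppFun {X : Type*} [NormedAddCommGroup X] [NormedSpace ℝ X] (x : X) :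
    Set (X →L[ℝ] ℝ) := {f | ‖f‖ = 1 ∧ f x = ‖x‖}

theorem stmt_11 {X Y : Type*} [NormedAddCommGroup X] [NormedSpace ℝ X]
    [NormedAddCommGroup Y] [NormedSpace ℝ Y]
    (x : X) (hx : x ≠ 0) (T : X →L[ℝ] Y) (n : ℕ)
    (f : Fin n → (X →L[ℝ] ℝ)) (hf : ∀ i, f i ∈ suppFun x) :
    (∀ i : Fin n, ∀ z : X, f i z = 0 → BJOrth (T x) (T z)) ↔
      ∀ g ∈ convexHull ℝ (Set.range f), ∀ z : X, g z = 0 → BJOrth (T x) (T z) := by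
  constructor
  · intro h g hg z hz
    by_cases hTx : T x = 0
    · intro t; simp [hTx]
    have hxn : (0:ℝ) < ‖x‖ := norm_pos_iff.mpr hx
    set μ : ℝ := ‖T x‖ / ‖x‖ with hμ
    set S : Set (X →L[ℝ] ℝ) :=
      {g | ∃ F : Y →L[ℝ] ℝ, ‖F‖ ≤ 1 ∧ F (T x) = ‖T x‖ ∧ ∀ w : X, F (T w) = μ * g w} with hS
    have hsub : convexHull ℝ (Set.range f) ⊆ S := by
      apply convexHull_min
      · rintro _ ⟨i, rfl⟩
        -- build the functional via the quotient by the closure of T (ker (f i))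
        set N : Submodule ℝ Y :=
          (Submodule.map (T : X →ₗ[ℝ] Y) (LinearMap.ker (f i : X →ₗ[ℝ] ℝ))).topologicalClosure with hN
        haveI : IsClosed (N : Set Y) := Submodule.isClosed_topologicalClosure _
        have hNle : ∀ w ∈ N, ‖T x‖ ≤ ‖T x + w‖ := by
          have hbase : (Submodule.map (T : X →ₗ[ℝ] Y) (LinearMap.ker (f i : X →ₗ[ℝ] ℝ)) : Set Y) ⊆
              {w : Y | ‖T x‖ ≤ ‖T x + w‖} := by
            rintro _ ⟨v, hv, rfl⟩
            simpa using h i v hv 1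
          have hcl : IsClosed {w : Y | ‖T x‖ ≤ ‖T x + w‖} :=
            isClosed_le continuous_const ((continuous_const.add continuous_id).norm)
          intro w hw
          have : w ∈ closure (Submodule.map (T : X →ₗ[ℝ] Y) (LinearMap.ker (f i : X →ₗ[ℝ] ℝ)) : Set Y) := by
            rw [hN] at hw
            rwa [← Submodule.topologicalClosure_coe]
          exact closure_minimal hbase hcl this
        have hinf : Metric.infDist (T x) (N : Set Y) = ‖T x‖ := by
          apply le_antisymm
          · have h0 : (0 : Y) ∈ (N : Set Y) := N.zero_mem
            simpa using Metric.infDist_le_dist_of_mem h0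
          · by_contra hcon
            push_neg at hcon
            obtain ⟨y, hy, hdy⟩ := (Metric.infDist_lt_iff ⟨0, N.zero_mem⟩).mp hcon
            have := hNle (-y) (N.neg_mem hy)
            rw [← sub_eq_add_neg, ← dist_eq_norm] at this
            linarith
        have hnorm : ‖(Submodule.Quotient.mk (T x) : Y ⧸ N)‖ = ‖T x‖ := by
          exact (QuotientAddGroup.norm_mk (T x) :
            ‖((T x : Y) : Y ⧸ N.toAddSubgroup)‖ = _).trans hinf
        have hne : (Submodule.Quotient.mk (T x) : Y ⧸ N) ≠ 0 := by
          intro hcon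
          rw [hcon, norm_zero] at hnorm
          exact hTx (norm_eq_zero.mp hnorm.symm)
        obtain ⟨G, hG1, hGx⟩ := exists_dual_vector ℝ _ (norm_ne_zero_iff.mpr hne)
        set π : Y →L[ℝ] (Y ⧸ N) := LinearMap.mkContinuous N.mkQ 1
          (fun m => by simpa using Submodule.Quotient.norm_mk_le N m) with hπ
        have hπapp : ∀ v : Y, π v = Submodule.Quotient.mk v := fun v => rfl
        have hπle : ‖π‖ ≤ 1 := LinearMap.mkContinuous_norm_le _ zero_le_one _
        have hπnn : (0:ℝ) ≤ ‖π‖ := norm_nonneg π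
        have hFxval : (G.comp π) (T x) = ‖T x‖ := by
          rw [ContinuousLinearMap.comp_apply, hπapp, hGx, hnorm]
          norm_num
        refine ⟨G.comp π, ?_, hFxval, ?_⟩
        · calc ‖G.comp π‖ ≤ ‖G‖ * ‖π‖ := ContinuousLinearMap.opNorm_comp_le _ _
            _ ≤ 1 * 1 := mul_le_mul hG1.le hπle hπnn zero_le_one
            _ = 1 := one_mul 1
        · have hker : ∀ v : X, f i v = 0 → (G.comp π) (T v) = 0 := by
            intro v hv
            have hmem : T v ∈ N := by
              rw [hN]
              exact Submodule.le_topologicalClosure _ ⟨v, hv, rfl⟩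
            rw [ContinuousLinearMap.comp_apply, hπapp,
              (Submodule.Quotient.mk_eq_zero N).mpr hmem, map_zero]
          intro w
          set c : ℝ := f i w / ‖x‖ with hc
          have hfw : f i (w - c • x) = 0 := by
            rw [map_sub, map_smul, (hf i).2, smul_eq_mul, hc]
            field_simp
            ring
          have := hker _ hfw
          rw [map_sub, map_smul, map_sub, map_smul, sub_eq_zero] at this
          rw [this, smul_eq_mul, hFxval, hμ, hc]
          field_simp
      · rintro g₁ ⟨F₁, hF₁, hFx₁, hFT₁⟩ g₂ ⟨F₂, hF₂, hFx₂, hFT₂⟩ a b ha hb hab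
        refine ⟨a • F₁ + b • F₂, ?_, ?_, ?_⟩
        · calc ‖a • F₁ + b • F₂‖ ≤ ‖a • F₁‖ + ‖b • F₂‖ := norm_add_le _ _
            _ ≤ a * 1 + b * 1 := by
                have h1 : ‖a • F₁‖ = a * ‖F₁‖ :=
                  (norm_smul a F₁).trans (by rw [Real.norm_of_nonneg ha])
                have h2 : ‖b • F₂‖ = b * ‖F₂‖ :=
                  (norm_smul b F₂).trans (by rw [Real.norm_of_nonneg hb])
                rw [h1, h2]
                exact add_le_add (mul_le_mul_of_nonneg_left hF₁ ha)
                  (mul_le_mul_of_nonneg_left hF₂ hb)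
            _ = 1 := by linarith
        · simp only [ContinuousLinearMap.add_apply, ContinuousLinearMap.smul_apply, hFx₁, hFx₂,
            smul_eq_mul]
          linear_combination ‖T x‖ * hab
        · intro w
          simp only [ContinuousLinearMap.add_apply, ContinuousLinearMap.smul_apply, hFT₁ w,
            hFT₂ w, smul_eq_mul]
          ring
    obtain ⟨F, hF1, hFx, hFT⟩ := hsub hg
    intro t
    have key : F (T x + t • T z) = ‖T x‖ := by
      rw [map_add, map_smul, hFx, hFT z, hz, smul_eq_mul]; ring
    calc ‖T x‖ = F (T x + t • T z) := key.symm
      _ ≤ ‖F (T x + t • T z)‖ := le_abs_self _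
      _ ≤ ‖F‖ * ‖T x + t • T z‖ := F.le_opNorm _
      _ ≤ 1 * ‖T x + t • T z‖ := by
          exact mul_le_mul_of_nonneg_right hF1 (norm_nonneg _)
      _ = ‖T x + t • T z‖ := one_mul _
  · intro h i z hz
    exact h (f i) (subset_convexHull ℝ _ ⟨i, rfl⟩) z hz
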